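/- Let n ≥ 2, z ≥ 1, ε ∈ (0,1), and let m, J ≥ 1 be integers. Let (cost_i)_{i=0}^{ℓ} be positive reals with cost_0 ≤ n^{z+1} · cost_ℓ, and suppose for every i ∈ [ℓ] there is a real v_i with 1/(2mJ) ≤ v_i ≤ 1 and cost_i ≤ (1 − (ε/2)·v_i) · cost_{i−1}. Then ℓ ≤ ⌈8 z ε^{−1} m J · ln n⌉. -/
import Mathlib


/-- Bound on the number of improving iterations of the local search: each swap
multiplies the objective by at most `1 − (ε/2)·vᵢ` with `1/(2mJ) ≤ vᵢ ≤ 1`,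
and the total decrease is bounded by the initial approximation factor `n^(z+1)`. -/
theorem iteration_count_bound (n : ℕ) (hn : 2 ≤ n) (z : ℝ) (hz : 1 ≤ z)
    (ε : ℝ) (hε0 : 0 < ε) (hε1 : ε < 1) (m J : ℕ) (hm : 1 ≤ m) (hJ : 1 ≤ J)
    (ℓ : ℕ) (cost : ℕ → ℝ) (hpos : ∀ i ≤ ℓ, 0 < cost i)
    (hfirst : cost 0 ≤ (n : ℝ) ^ (z + 1) * cost ℓ)
    (v : ℕ → ℝ)
    (hv : ∀ i < ℓ, (1 / (2 * (m : ℝ) * (J : ℝ))) ≤ v (i + 1) ∧ v (i + 1) ≤ 1 ∧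
      cost (i + 1) ≤ (1 - (ε / 2) * v (i + 1)) * cost i) :
    (ℓ : ℝ) ≤ ((⌈8 * z * ε⁻¹ * (m : ℝ) * (J : ℝ) * Real.log n⌉ : ℤ) : ℝ) := by
  have hm' : (1 : ℝ) ≤ m := by exact_mod_cast hm
  have hJ' : (1 : ℝ) ≤ J := by exact_mod_cast hJ
  have hmJ : (1 : ℝ) ≤ (m : ℝ) * J := by nlinarith
  set δ : ℝ := ε / (4 * m * J) with hδ
  have hmJpos : (0:ℝ) < (m:ℝ) * J := lt_of_lt_of_le one_pos hmJ
  have hδpos : 0 < δ := by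
    apply div_pos hε0
    positivity
  have hδle : δ ≤ ε / 4 := by
    rw [hδ, div_le_div_iff₀ (by positivity) (by norm_num)]
    nlinarith
  have hδlt1 : δ < 1 := lt_of_le_of_lt hδle (by linarith)
  -- each step contracts by (1-δ)
  have hstep : ∀ i < ℓ, cost (i+1) ≤ (1 - δ) * cost i := by
    intro i hi
    obtain ⟨h1, h2, h3⟩ := hv i hi
    have hci : 0 < cost i := hpos i (le_of_lt hi)
    have hvδ : δ ≤ (ε / 2) * v (i+1) := by
      have : (ε/2) * (1 / (2 * (m:ℝ) * J)) ≤ (ε/2) * v (i+1) :=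
        mul_le_mul_of_nonneg_left h1 (by linarith)
      have heq : δ = (ε/2) * (1 / (2 * (m:ℝ) * J)) := by
        rw [hδ, div_eq_mul_inv, div_eq_mul_inv, one_div,
          show (4:ℝ) * m * J = 2 * (2 * m * J) by ring, mul_inv]
        ring
      linarith [this, heq]
    calc cost (i+1) ≤ (1 - (ε/2) * v (i+1)) * cost i := h3
      _ ≤ (1 - δ) * cost i := by nlinarith
  have hiter : cost ℓ ≤ (1 - δ) ^ ℓ * cost 0 := by
    have : ∀ k ≤ ℓ, cost k ≤ (1 - δ) ^ k * cost 0 := by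
      intro k hk
      induction k with
      | zero => simp
      | succ j ih =>
        have hj : j ≤ ℓ := Nat.le_of_succ_le hk
        have hjl : j < ℓ := hk
        calc cost (j+1) ≤ (1 - δ) * cost j := hstep j hjl
          _ ≤ (1 - δ) * ((1 - δ)^j * cost 0) := by
              apply mul_le_mul_of_nonneg_left (ih hj) (by linarith)
          _ = (1 - δ)^(j+1) * cost 0 := by ring
    exact this ℓ le_rfl
  have hc0 : 0 < cost 0 := hpos 0 (Nat.zero_le _)
  have hcl : 0 < cost ℓ := hpos ℓ le_rfl
  have hn' : (1:ℝ) < n := by exact_mod_cast Nat.one_lt_two.trans_le hn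
  have hlogn : 0 < Real.log n := Real.log_pos hn'
  have key : 1 ≤ (n:ℝ) ^ (z+1) * (1 - δ)^ℓ := by
    have h1 : cost 0 ≤ (n:ℝ)^(z+1) * ((1-δ)^ℓ * cost 0) := by
      calc cost 0 ≤ (n:ℝ)^(z+1) * cost ℓ := hfirst
        _ ≤ (n:ℝ)^(z+1) * ((1-δ)^ℓ * cost 0) := by
            apply mul_le_mul_of_nonneg_left hiter
            positivity
    nlinarith [mul_pos hc0 hc0]
  have hexp : (1 - δ)^ℓ ≤ Real.exp (-(δ * ℓ)) := by
    calc (1 - δ)^ℓ ≤ (Real.exp (-δ))^ℓ := by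
          apply pow_le_pow_left₀ (by linarith)
          linarith [Real.add_one_le_exp (-δ)]
      _ = Real.exp (-(δ * ℓ)) := by
          rw [← Real.exp_nat_mul]; ring_nf
  have hrpow : (n:ℝ)^(z+1) = Real.exp ((z+1) * Real.log n) := by
    rw [Real.rpow_def_of_pos (by linarith)]
    ring_nf
  have key2 : Real.exp (δ * ℓ) ≤ Real.exp ((z+1) * Real.log n) := by
    rw [← hrpow]
    have h1 : 1 ≤ (n:ℝ)^(z+1) * Real.exp (-(δ * ℓ)) := by
      calc (1:ℝ) ≤ (n:ℝ)^(z+1) * (1-δ)^ℓ := key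
        _ ≤ (n:ℝ)^(z+1) * Real.exp (-(δ * ℓ)) := by
            apply mul_le_mul_of_nonneg_left hexp
            positivity
    have he : Real.exp (δ * ℓ) * Real.exp (-(δ * ℓ)) = 1 := by
      rw [← Real.exp_add]; simp
    nlinarith [Real.exp_pos (-(δ * ℓ)), Real.exp_pos (δ * ℓ)]
  have hlin : δ * ℓ ≤ (z+1) * Real.log n := Real.exp_le_exp.mp key2
  have hbound : (ℓ : ℝ) ≤ 8 * z * ε⁻¹ * m * J * Real.log n := by
    have h4 : (ℓ:ℝ) ≤ (z+1) * Real.log n / δ := by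
      rw [le_div_iff₀ hδpos]; linarith [hlin]
    calc (ℓ:ℝ) ≤ (z+1) * Real.log n / δ := h4
      _ = (z+1) * Real.log n * (4 * m * J) / ε := by
          rw [hδ]; field_simp
      _ ≤ 2 * z * Real.log n * (4 * m * J) / ε := by
          gcongr
          nlinarith
      _ = 8 * z * ε⁻¹ * m * J * Real.log n := by
          field_simp; ring
  exact hbound.trans (Int.le_ceil _)
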